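/- The (promise-free) GHZ game is non-signaling: there exists a strategy solving it with probability 1 whose S-marginals depend only on the inputs of the players in S, for every subset S of the three players (for inputs with x ⊕ y ⊕ z = 0 one may take the uniform distribution over the four output triples (a,b,c) with a ⊕ b ⊕ c = x ∨ y ∨ z, and for the remaining inputs the uniform distribution over all eight output triples). -/

import Mathlib

private def ghzF (c : Bool) (p : Bool × Bool) : Fin 3 → Bool :=
  ![p.1, p.2, Bool.xor p.1 (Bool.xor p.2 c)]

private lemma uniform_map_equiv (e : Bool × Bool ≃ Bool × Bool) :
    (PMF.uniformOfFintype (Bool × Bool)).map e = PMF.uniformOfFintype (Bool × Bool) := by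
  ext z
  rw [PMF.map_apply]
  rw [tsum_eq_single (e.symm z) (by
    intro b hb
    simp only [ite_eq_right_iff]
    intro hz
    exact absurd (by simp [hz]) hb)]
  simp

/-- **The (promise-free) GHZ game is non-signaling**: there exists a strategy solving it
with probability 1 whose `T`-marginals depend only on the inputs of the players in `T`,
for every subset `T` of the three players.
Here the GHZ game on inputs `x : Fin 3 → Bool` and outputs `y : Fin 3 → Bool` requires:
if `x 0 ⊕ x 1 ⊕ x 2 = 0` then `y 0 ⊕ y 1 ⊕ y 2 = x 0 ∨ x 1 ∨ x 2`. -/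
theorem ghz_nonsignaling :
    ∃ ρ : (Fin 3 → Bool) → PMF (Fin 3 → Bool),
      (∀ x : Fin 3 → Bool, ∀ y ∈ (ρ x).support,
          Bool.xor (x 0) (Bool.xor (x 1) (x 2)) = false →
            Bool.xor (y 0) (Bool.xor (y 1) (y 2)) = (x 0 || x 1 || x 2)) ∧
      (∀ (T : Set (Fin 3)) (x x' : Fin 3 → Bool),
          (∀ i ∈ T, x i = x' i) →
          (ρ x).map T.restrict = (ρ x').map T.restrict) := by
  classical
  set c : (Fin 3 → Bool) → Bool := fun x => x 0 || x 1 || x 2 with hc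
  refine ⟨fun x => (PMF.uniformOfFintype (Bool × Bool)).map (ghzF (c x)), ?_, ?_⟩
  · intro x y hy _
    rw [PMF.mem_support_map_iff] at hy
    obtain ⟨⟨a, b⟩, -, rfl⟩ := hy
    simp only [ghzF, hc]
    cases a <;> cases b <;> cases x 0 <;> cases x 1 <;> cases x 2 <;> rfl
  · intro T x x' h
    simp only []
    by_cases hcc : c x = c x'
    · rw [show ghzF (c x) = ghzF (c x') from by rw [hcc]]
    have hex : ∃ i : Fin 3, i ∉ T := by
      by_contra hne
      push_neg at hne
      apply hcc
      simp only [hc]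
      rw [h 0 (hne 0), h 1 (hne 1), h 2 (hne 2)]
    obtain ⟨i, hi⟩ := hex
    have hcx' : c x' = !(c x) := by
      cases hx : c x <;> cases hx' : c x' <;> rw [hx, hx'] at hcc <;> revert hcc <;> decide
    rw [PMF.map_comp, PMF.map_comp, hcx']
    have key : ∀ σ : Bool × Bool ≃ Bool × Bool,
        (T.restrict ∘ ghzF (c x)) = (T.restrict ∘ ghzF (!(c x))) ∘ σ →
        (PMF.uniformOfFintype (Bool × Bool)).map (T.restrict ∘ ghzF (c x))
          = (PMF.uniformOfFintype (Bool × Bool)).map (T.restrict ∘ ghzF (!(c x))) := by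
      intro σ hσ
      rw [hσ]
      calc (PMF.uniformOfFintype (Bool × Bool)).map ((T.restrict ∘ ghzF (!(c x))) ∘ σ)
          = ((PMF.uniformOfFintype (Bool × Bool)).map σ).map (T.restrict ∘ ghzF (!(c x))) := by
            rw [PMF.map_comp]
        _ = _ := by rw [uniform_map_equiv]
    have flip1 : Bool × Bool ≃ Bool × Bool :=
      ⟨fun p => (!p.1, p.2), fun p => (!p.1, p.2), fun p => by simp, fun p => by simp⟩
    have flip2 : Bool × Bool ≃ Bool × Bool :=
      ⟨fun p => (p.1, !p.2), fun p => (p.1, !p.2), fun p => by simp, fun p => by simp⟩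
    fin_cases i
    · refine key ⟨fun p => (!p.1, p.2), fun p => (!p.1, p.2), fun p => by simp, fun p => by simp⟩ ?_
      funext p
      funext ⟨j, hj⟩
      have hji : j ≠ 0 := by rintro rfl; exact hi hj
      fin_cases j
      · exact absurd rfl hji
      · rfl
      · show ghzF (c x) p 2 = ghzF (!(c x)) (!p.1, p.2) 2
        simp only [ghzF]
        cases p.1 <;> cases p.2 <;> cases c x <;> rfl
    · refine key ⟨fun p => (p.1, !p.2), fun p => (p.1, !p.2), fun p => by simp, fun p => by simp⟩ ?_
      funext p
      funext ⟨j, hj⟩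
      have hji : j ≠ 1 := by rintro rfl; exact hi hj
      fin_cases j
      · rfl
      · exact absurd rfl hji
      · show ghzF (c x) p 2 = ghzF (!(c x)) (p.1, !p.2) 2
        simp only [ghzF]
        cases p.1 <;> cases p.2 <;> cases c x <;> rfl
    · refine key (Equiv.refl _) ?_
      funext p
      funext ⟨j, hj⟩
      have hji : j ≠ 2 := by rintro rfl; exact hi hj
      fin_cases j
      · rfl
      · rfl
      · exact absurd rfl hji
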